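/- Let G be a finite simple graph on n vertices and k ≥ 1 an integer. Let v_1, v_2, …, v_n be an ordering of the vertices such that for every i, the vertex v_i is contained in the minimum number of k-cliques of the induced subgraph G_i := G[{v_i, v_{i+1}, …, v_n}], among all vertices of G_i (i.e., the vertices are peeled in order of minimum k-clique count). Then max_{1 ≤ i ≤ n} c_k(G_i) / (n − i + 1) ≥ (1/k) · max_{∅ ≠ W ⊆ V} c_k(G[W]) / |W|; that is, the peeling process yields a 1/k-approximation to the k-clique densest subgraph problem. -/

import Mathlib

open Classical Finset

/-- `cliquesIn G k W` is the number of `k`-cliques of the induced subgraph `G[W]`, i.e. the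
number of `k`-cliques of `G` all of whose vertices lie in `W`. -/
noncomputable def cliquesIn {V : Type*} [Fintype V] [DecidableEq V] (G : SimpleGraph V)
    [DecidableRel G.Adj] (k : ℕ) (W : Finset V) : ℕ :=
  ((G.cliqueFinset k).filter fun s => s ⊆ W).card

/-- `kCliqueDeg G k W v` is the number of `k`-cliques of the induced subgraph `G[W]`
that contain the vertex `v`. -/
noncomputable def kCliqueDeg {V : Type*} [Fintype V] [DecidableEq V] (G : SimpleGraph V)
    [DecidableRel G.Adj] (k : ℕ) (W : Finset V) (v : V) : ℕ :=
  ((G.cliqueFinset k).filter fun s => s ⊆ W ∧ v ∈ s).card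

/-- Peeling yields a `1/k`-approximation to the `k`-clique densest subgraph problem:
enumerate the vertices as `e 0, e 1, …` so that, letting `S i` be the set of vertices with
index at least `i` (so `G[S i]` is the graph remaining before the `i`-th peeling step), the
vertex `e i` has the minimum number of `k`-cliques of `G[S i]` among all vertices of `S i`.
Then for every nonempty vertex set `W` there is a suffix `S i` whose `k`-clique density is at
least `1/k` times the `k`-clique density of `G[W]`. -/
lemma sum_kCliqueDeg {V : Type*} [Fintype V] [DecidableEq V] (G : SimpleGraph V)
    [DecidableRel G.Adj] (k : ℕ) (Wset : Finset V) :
    ∑ u ∈ Wset, kCliqueDeg G k Wset u = k * cliquesIn G k Wset := by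
  have h1 : ∀ u : V, kCliqueDeg G k Wset u
      = ∑ s ∈ (G.cliqueFinset k).filter (fun s => s ⊆ Wset), (if u ∈ s then 1 else 0) := by
    intro u
    rw [kCliqueDeg, ← Finset.filter_filter, Finset.card_filter]
  calc ∑ u ∈ Wset, kCliqueDeg G k Wset u
      = ∑ s ∈ (G.cliqueFinset k).filter (fun s => s ⊆ Wset),
          ∑ u ∈ Wset, (if u ∈ s then 1 else 0) := by
        simp_rw [h1]; rw [Finset.sum_comm]
    _ = ∑ _s ∈ (G.cliqueFinset k).filter (fun s => s ⊆ Wset), k := by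
        apply Finset.sum_congr rfl
        intro s hs
        have hs' := Finset.mem_filter.mp hs
        have hcard : s.card = k := ((SimpleGraph.mem_cliqueFinset_iff).mp hs'.1).2
        rw [← Finset.card_filter]
        have : Wset.filter (fun u => u ∈ s) = s := by
          ext x
          simp only [Finset.mem_filter]
          exact ⟨fun h => h.2, fun h => ⟨hs'.2 h, h⟩⟩
        rw [this, hcard]
    _ = k * cliquesIn G k Wset := by
        rw [Finset.sum_const, smul_eq_mul, mul_comm]; rfl

lemma cliquesIn_erase {V : Type*} [Fintype V] [DecidableEq V] (G : SimpleGraph V)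
    [DecidableRel G.Adj] (k : ℕ) (Wset : Finset V) (v : V) :
    cliquesIn G k Wset = cliquesIn G k (Wset.erase v) + kCliqueDeg G k Wset v := by
  unfold cliquesIn kCliqueDeg
  have h1 : ((G.cliqueFinset k).filter fun s => s ⊆ Wset.erase v)
      = ((G.cliqueFinset k).filter fun s => s ⊆ Wset).filter fun s => v ∉ s := by
    rw [Finset.filter_filter]
    apply Finset.filter_congr
    intro s _
    simp [Finset.subset_erase, and_comm]
  have h2 : ((G.cliqueFinset k).filter fun s => s ⊆ Wset ∧ v ∈ s)
      = ((G.cliqueFinset k).filter fun s => s ⊆ Wset).filter fun s => v ∈ s := by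
    rw [Finset.filter_filter]
  rw [h1, h2, add_comm, Finset.card_filter_add_card_filter_not]

lemma kCliqueDeg_mono {V : Type*} [Fintype V] [DecidableEq V] (G : SimpleGraph V)
    [DecidableRel G.Adj] (k : ℕ) {W1 W2 : Finset V} (h : W1 ⊆ W2) (v : V) :
    kCliqueDeg G k W1 v ≤ kCliqueDeg G k W2 v := by
  apply Finset.card_le_card
  intro s hs
  rw [Finset.mem_filter] at *
  exact ⟨hs.1, hs.2.1.trans h, hs.2.2⟩

theorem peeling_approximation {V : Type*} [Fintype V] [DecidableEq V]
    (G : SimpleGraph V) [DecidableRel G.Adj] (k : ℕ) (hk : 1 ≤ k)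
    (e : Fin (Fintype.card V) ≃ V) (S : Fin (Fintype.card V) → Finset V)
    (hS : ∀ i, S i = Finset.univ.filter fun u => (i : ℕ) ≤ ((e.symm u : Fin (Fintype.card V)) : ℕ))
    (hmin : ∀ i, ∀ u ∈ S i, kCliqueDeg G k (S i) (e i) ≤ kCliqueDeg G k (S i) u) :
    ∀ W : Finset V, W.Nonempty → ∃ i : Fin (Fintype.card V),
      (1 / (k : ℝ)) * ((cliquesIn G k W : ℝ) / (W.card : ℝ))
        ≤ (cliquesIn G k (S i) : ℝ) / ((S i).card : ℝ) := by
  intro W hW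
  -- a densest subset U of W
  obtain ⟨U, hUmem, hUmax⟩ := (W.powerset.filter Finset.Nonempty).exists_max_image
      (fun U => (cliquesIn G k U : ℝ) / (U.card : ℝ))
      ⟨W, by simp [Finset.mem_powerset, hW]⟩
  rw [Finset.mem_filter, Finset.mem_powerset] at hUmem
  obtain ⟨hUW, hUne⟩ := hUmem
  -- minimal index of a vertex of U
  have himg : (U.image e.symm).Nonempty := hUne.image _
  set i := (U.image e.symm).min' himg with hi
  refine ⟨i, ?_⟩
  have heiU : e i ∈ U := by
    obtain ⟨u, hu, hu'⟩ := Finset.mem_image.mp ((U.image e.symm).min'_mem himg)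
    rw [hi, ← hu']; simpa using hu
  have hUS : U ⊆ S i := by
    intro u hu
    rw [hS i, Finset.mem_filter]
    refine ⟨Finset.mem_univ _, ?_⟩
    have : i ≤ e.symm u := Finset.min'_le _ _ (Finset.mem_image_of_mem _ hu)
    exact this
  have heiS : e i ∈ S i := hUS heiU
  have hmpos : 0 < (S i).card := Finset.card_pos.mpr ⟨e i, heiS⟩
  have hmUpos : 0 < U.card := Finset.card_pos.mpr hUne
  have hWpos : 0 < W.card := Finset.card_pos.mpr hW
  have hkpos : (0 : ℝ) < k := by exact_mod_cast hk
  -- notation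
  set d := kCliqueDeg G k (S i) (e i) with hd
  set dU := kCliqueDeg G k U (e i) with hdU
  -- sum bound : card (S i) * d ≤ k * cliquesIn (S i)
  have hsum : (S i).card * d ≤ k * cliquesIn G k (S i) := by
    rw [← sum_kCliqueDeg G k (S i)]
    calc (S i).card * d = ∑ _u ∈ S i, d := by rw [Finset.sum_const, smul_eq_mul]
      _ ≤ ∑ u ∈ S i, kCliqueDeg G k (S i) u := Finset.sum_le_sum (fun u hu => hmin i u hu)
  have hdUd : dU ≤ d := kCliqueDeg_mono G k hUS (e i)
  -- cliquesIn U ≤ dU * U.card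
  have hkey : (cliquesIn G k U : ℝ) ≤ (dU : ℝ) * (U.card : ℝ) := by
    rcases eq_or_lt_of_le (Nat.succ_le_of_lt hmUpos) with h1 | h2
    · -- U.card = 1, so U = {e i}
      have hU1 : U = {e i} := by
        obtain ⟨a, ha⟩ := Finset.card_eq_one.mp h1.symm
        rw [ha] at heiU ⊢
        rw [Finset.mem_singleton] at heiU
        rw [heiU]
      have : cliquesIn G k U ≤ dU := by
        apply Finset.card_le_card
        intro s hs
        rw [Finset.mem_filter] at *
        refine ⟨hs.1, hs.2, ?_⟩
        have hcard : s.card = k := ((SimpleGraph.mem_cliqueFinset_iff).mp hs.1).2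
        have hsne : s.Nonempty := Finset.card_pos.mp (by omega)
        obtain ⟨x, hx⟩ := hsne
        have := hs.2 hx
        rw [hU1, Finset.mem_singleton] at this
        rwa [← this]
      calc (cliquesIn G k U : ℝ) ≤ (dU : ℝ) := by exact_mod_cast this
        _ ≤ (dU : ℝ) * (U.card : ℝ) := by
            have h1' : (1:ℝ) ≤ (U.card : ℝ) := by exact_mod_cast hmUpos
            nlinarith [Nat.cast_nonneg (α := ℝ) dU]
    · -- U.card ≥ 2
      have herase_ne : (U.erase (e i)).Nonempty := by
        rw [← Finset.card_pos, Finset.card_erase_of_mem heiU]; omega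
      have herase_mem : U.erase (e i) ∈ W.powerset.filter Finset.Nonempty := by
        rw [Finset.mem_filter, Finset.mem_powerset]
        exact ⟨(Finset.erase_subset _ _).trans hUW, herase_ne⟩
      have hmax' := hUmax _ herase_mem
      have hcount := cliquesIn_erase G k U (e i)
      have hce : (cliquesIn G k (U.erase (e i)) : ℝ) = (cliquesIn G k U : ℝ) - dU := by
        rw [hcount]; push_cast; ring
      have hcarde : ((U.erase (e i)).card : ℝ) = (U.card : ℝ) - 1 := by
        rw [Finset.card_erase_of_mem heiU]
        have : 1 ≤ U.card := hmUpos
        push_cast [this]; ring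
      rw [hce, hcarde] at hmax'
      have hm1 : (0:ℝ) < (U.card : ℝ) - 1 := by
        have : 2 ≤ U.card := h2
        have : (2:ℝ) ≤ U.card := by exact_mod_cast this
        linarith
      have hmU : (0:ℝ) < (U.card : ℝ) := by exact_mod_cast hmUpos
      rw [div_le_div_iff₀ hm1 hmU] at hmax'
      nlinarith [hmax']
  -- now chain the inequalities
  have hWU : (cliquesIn G k W : ℝ) / (W.card : ℝ) ≤ (cliquesIn G k U : ℝ) / (U.card : ℝ) :=
    hUmax W (by simp [Finset.mem_powerset, hW])
  have hUdU : (cliquesIn G k U : ℝ) / (U.card : ℝ) ≤ (dU : ℝ) := by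
    rw [div_le_iff₀ (by exact_mod_cast hmUpos)]
    exact hkey
  have hdd : (dU : ℝ) ≤ (d : ℝ) := by exact_mod_cast hdUd
  have hfin : (d : ℝ) ≤ (k : ℝ) * ((cliquesIn G k (S i) : ℝ) / ((S i).card : ℝ)) := by
    have hm : (0:ℝ) < ((S i).card : ℝ) := by exact_mod_cast hmpos
    rw [mul_div_assoc', le_div_iff₀ hm]
    have : ((S i).card : ℝ) * d ≤ (k : ℝ) * (cliquesIn G k (S i) : ℝ) := by exact_mod_cast hsum
    linarith
  have : (cliquesIn G k W : ℝ) / (W.card : ℝ)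
      ≤ (k : ℝ) * ((cliquesIn G k (S i) : ℝ) / ((S i).card : ℝ)) := by linarith
  calc (1 / (k : ℝ)) * ((cliquesIn G k W : ℝ) / (W.card : ℝ))
      ≤ (1 / (k : ℝ)) * ((k : ℝ) * ((cliquesIn G k (S i) : ℝ) / ((S i).card : ℝ))) := by
        apply mul_le_mul_of_nonneg_left this (by positivity)
    _ = (cliquesIn G k (S i) : ℝ) / ((S i).card : ℝ) := by
        field_simp
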